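/- In finite dimensions, the composition of two Lagrangians is always a Lagrangian: if W₀, W₁, W₂ are finite-dimensional complex inner product spaces with real structures, and L₀₁ ⊆ W₀ ⊕ (−W₁), L₁₂ ⊆ W₁ ⊕ (−W₂) are Lagrangians, then L₀₁ ∘ L₁₂ is a Lagrangian in W₀ ⊕ (−W₂). -/

import Mathlib

noncomputable section

section Aux

/-- Riesz-type extension lemma. -/
lemma exists_riesz {F G : Type*} [NormedAddCommGroup F] [InnerProductSpace ℂ F]
    [FiniteDimensional ℂ F] [AddCommGroup G] [Module ℂ G]
    (M : Submodule ℂ (F × G)) (f : (F × G) →ₗ[ℂ] ℂ)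
    (h : ∀ p ∈ M, p.1 = 0 → f p = 0) :
    ∃ s : F, ∀ p ∈ M, (inner ℂ p.1 s : ℂ) = (starRingEnd ℂ) (f p) := by
  set π : M →ₗ[ℂ] F := (LinearMap.fst ℂ F G).comp M.subtype with hπdef
  set g : M →ₗ[ℂ] ℂ := f.comp M.subtype with hgdef
  set V := LinearMap.range π with hVdef
  obtain ⟨σ, hσ⟩ := π.rangeRestrict.exists_rightInverse_of_surjective
      (LinearMap.range_rangeRestrict π)
  haveI : CompleteSpace V := FiniteDimensional.complete ℂ V
  set h' : V →ₗ[ℂ] ℂ := g.comp σ with hh'def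
  set s₀ := (InnerProductSpace.toDual ℂ V).symm (LinearMap.toContinuousLinearMap h') with hs₀
  refine ⟨(s₀ : F), ?_⟩
  intro p hp
  set q : M := ⟨p, hp⟩ with hq
  set u : V := π.rangeRestrict q with hu
  have hucoe : (u : F) = p.1 := rfl
  have key : g (σ u) = g q := by
    have hres : π.rangeRestrict (σ u) = u := by
      exact LinearMap.congr_fun hσ u
    have hmem : π.rangeRestrict (σ u - q) = 0 := by
      rw [map_sub, hres, hu, sub_self]
    have h1 : ((σ u - q : M) : F × G).1 = 0 := by
      have := congrArg Subtype.val hmem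
      simpa [π] using this
    have h2 : g (σ u - q) = 0 := h _ (σ u - q).2 h1
    rw [map_sub, sub_eq_zero] at h2
    exact h2
  have hinner : (inner ℂ s₀ u : ℂ) = g q := by
    have := InnerProductSpace.toDual_symm_apply (𝕜 := ℂ) (E := V)
      (x := u) (y := LinearMap.toContinuousLinearMap h')
    rw [← hs₀] at this
    rw [this]
    simpa [h'] using key
  have hcoe : (inner ℂ (s₀ : F) p.1 : ℂ) = g q := by
    rw [← hucoe, ← Submodule.coe_inner, hinner]
  have : (inner ℂ p.1 (s₀ : F) : ℂ) = (starRingEnd ℂ) (g q) := by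
    rw [← inner_conj_symm, hcoe]
  simpa [g] using this

end Aux

/-- A real structure on a complex inner product space: an anti-unitary involution `v ↦ v̄`. -/
structure RealStructure (W : Type*) [NormedAddCommGroup W] [InnerProductSpace ℂ W] where
  conj : W → W
  map_add : ∀ v w : W, conj (v + w) = conj v + conj w
  map_smul : ∀ (c : ℂ) (v : W), conj (c • v) = (starRingEnd ℂ) c • conj v
  invol : ∀ v : W, conj (conj v) = v
  inner_conj : ∀ v w : W, (inner ℂ (conj v) (conj w) : ℂ) = (starRingEnd ℂ) (inner ℂ v w : ℂ)

lemma RealStructure.conj_neg {W : Type*} [NormedAddCommGroup W] [InnerProductSpace ℂ W]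
    (r : RealStructure W) (v : W) : r.conj (-v) = -r.conj v := by
  have := r.map_smul (-1) v
  simpa using this

/-- The real structure of `A ⊕ (−B)`. -/
def pairConj {A B : Type*} [NormedAddCommGroup A] [InnerProductSpace ℂ A]
    [NormedAddCommGroup B] [InnerProductSpace ℂ B]
    (rA : RealStructure A) (rB : RealStructure B) : A × B → A × B :=
  fun p => (rA.conj p.1, -rB.conj p.2)

lemma pairConj_invol {A B : Type*} [NormedAddCommGroup A] [InnerProductSpace ℂ A]
    [NormedAddCommGroup B] [InnerProductSpace ℂ B]
    (rA : RealStructure A) (rB : RealStructure B) (p : A × B) :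
    pairConj rA rB (pairConj rA rB p) = p := by
  simp [pairConj, rA.invol, rB.conj_neg, rB.invol]

/-- The Hermitian inner product of `A ⊕ B`. -/
def pairInner {A B : Type*} [NormedAddCommGroup A] [InnerProductSpace ℂ A]
    [NormedAddCommGroup B] [InnerProductSpace ℂ B] (x y : A × B) : ℂ :=
  (inner ℂ x.1 y.1 : ℂ) + (inner ℂ x.2 y.2 : ℂ)

/-- A Lagrangian `L ⊆ A ⊕ (−B)`. -/
def IsLagrangianPair {A B : Type*} [NormedAddCommGroup A] [InnerProductSpace ℂ A]
    [NormedAddCommGroup B] [InnerProductSpace ℂ B]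
    (rA : RealStructure A) (rB : RealStructure B) (L : Submodule ℂ (A × B)) : Prop :=
  pairConj rA rB '' (L : Set (A × B)) = {y : A × B | ∀ x ∈ L, pairInner x y = 0}

lemma mem_of_lagrangian {A B : Type*} [NormedAddCommGroup A] [InnerProductSpace ℂ A]
    [NormedAddCommGroup B] [InnerProductSpace ℂ B]
    {rA : RealStructure A} {rB : RealStructure B} {L : Submodule ℂ (A × B)}
    (hL : IsLagrangianPair rA rB L) (p : A × B)
    (hp : ∀ x ∈ L, pairInner x (pairConj rA rB p) = 0) : p ∈ L := by
  have hmem : pairConj rA rB p ∈ pairConj rA rB '' (L : Set (A × B)) := by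
    rw [hL]; exact hp
  obtain ⟨q, hq, hqe⟩ := hmem
  have := congrArg (pairConj rA rB) hqe
  rw [pairConj_invol, pairConj_invol] at this
  rwa [← this]

/-- The composition of two linear relations `L₀₁ ⊆ W₀ × W₁`, `L₁₂ ⊆ W₁ × W₂`. -/
def composeRel {W₀ W₁ W₂ : Type*} [NormedAddCommGroup W₀] [InnerProductSpace ℂ W₀]
    [NormedAddCommGroup W₁] [InnerProductSpace ℂ W₁]
    [NormedAddCommGroup W₂] [InnerProductSpace ℂ W₂]
    (L01 : Submodule ℂ (W₀ × W₁)) (L12 : Submodule ℂ (W₁ × W₂)) :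
    Submodule ℂ (W₀ × W₂) where
  carrier := {p | ∃ w₁ : W₁, (p.1, w₁) ∈ L01 ∧ (w₁, p.2) ∈ L12}
  add_mem' := by
    rintro a b ⟨w, hw1, hw2⟩ ⟨w', hw1', hw2'⟩
    exact ⟨w + w', L01.add_mem hw1 hw1', L12.add_mem hw2 hw2'⟩
  zero_mem' := ⟨0, L01.zero_mem, L12.zero_mem⟩
  smul_mem' := by
    rintro c a ⟨w, hw1, hw2⟩
    exact ⟨c • w, L01.smul_mem c hw1, L12.smul_mem c hw2⟩

variable {W₀ W₁ W₂ : Type*}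
  [NormedAddCommGroup W₀] [InnerProductSpace ℂ W₀] [FiniteDimensional ℂ W₀]
  [NormedAddCommGroup W₁] [InnerProductSpace ℂ W₁] [FiniteDimensional ℂ W₁]
  [NormedAddCommGroup W₂] [InnerProductSpace ℂ W₂] [FiniteDimensional ℂ W₂]

/-- In finite dimensions, the composition of two Lagrangians is always a Lagrangian. -/
theorem composition_lagrangian_finite_dimensional
    (r₀ : RealStructure W₀) (r₁ : RealStructure W₁) (r₂ : RealStructure W₂)
    (L01 : Submodule ℂ (W₀ × W₁)) (L12 : Submodule ℂ (W₁ × W₂))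
    (h01 : IsLagrangianPair r₀ r₁ L01) (h12 : IsLagrangianPair r₁ r₂ L12) :
    IsLagrangianPair r₀ r₂ (composeRel L01 L12) := by
  apply Set.Subset.antisymm
  · -- easy inclusion
    rintro y ⟨⟨a, b⟩, ⟨w, h1, h2⟩, rfl⟩
    rintro ⟨p1, p2⟩ ⟨wy, hp1, hp2⟩
    have e1 : pairInner (p1, wy) (pairConj r₀ r₁ (a, w)) = 0 := by
      have hmem : pairConj r₀ r₁ (a, w) ∈ pairConj r₀ r₁ '' (L01 : Set (W₀ × W₁)) :=
        ⟨(a, w), h1, rfl⟩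
      rw [h01] at hmem
      exact hmem _ hp1
    have e2 : pairInner (wy, p2) (pairConj r₁ r₂ (w, b)) = 0 := by
      have hmem : pairConj r₁ r₂ (w, b) ∈ pairConj r₁ r₂ '' (L12 : Set (W₁ × W₂)) :=
        ⟨(w, b), h2, rfl⟩
      rw [h12] at hmem
      exact hmem _ hp2
    simp only [pairInner, pairConj, inner_neg_right] at e1 e2 ⊢
    linear_combination e1 + e2
  · -- hard inclusion
    rintro ⟨y₁, y₂⟩ hy
    simp only [Set.mem_setOf_eq] at hy
    -- the auxiliary submodule M of W₁ × (W₀ × W₂)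
    set M : Submodule ℂ (W₁ × (W₀ × W₂)) :=
      { carrier := {p | ∃ u₁ u₂ : W₁, p.1 = u₁ + u₂ ∧ (p.2.1, u₁) ∈ L01 ∧ (u₂, p.2.2) ∈ L12}
        add_mem' := by
          rintro a b ⟨u₁, u₂, he, ha, hb⟩ ⟨v₁, v₂, he', ha', hb'⟩
          refine ⟨u₁ + v₁, u₂ + v₂, ?_, L01.add_mem ha ha', L12.add_mem hb hb'⟩
          show a.1 + b.1 = _
          rw [he, he']; abel
        zero_mem' := ⟨0, 0, by simp, L01.zero_mem, L12.zero_mem⟩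
        smul_mem' := by
          rintro c a ⟨u₁, u₂, he, ha, hb⟩
          refine ⟨c • u₁, c • u₂, ?_, L01.smul_mem c ha, L12.smul_mem c hb⟩
          show c • a.1 = _
          rw [he, smul_add] } with hM
    -- the functional f
    set f : (W₁ × (W₀ × W₂)) →ₗ[ℂ] ℂ :=
      ((innerSL ℂ y₁).toLinearMap.comp
          ((LinearMap.fst ℂ W₀ W₂).comp (LinearMap.snd ℂ W₁ (W₀ × W₂)))) -
        ((innerSL ℂ y₂).toLinearMap.comp
          ((LinearMap.snd ℂ W₀ W₂).comp (LinearMap.snd ℂ W₁ (W₀ × W₂)))) with hf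
    have hfapp : ∀ p : W₁ × (W₀ × W₂), f p = (inner ℂ y₁ p.2.1 : ℂ) - (inner ℂ y₂ p.2.2 : ℂ) := by
      intro p; simp [hf]
    have hker : ∀ p ∈ M, p.1 = 0 → f p = 0 := by
      rintro p ⟨u₁, u₂, he, ha, hb⟩ hp1
      have hu : u₂ = -u₁ := by
        have h0 : u₁ + u₂ = 0 := by rw [← he, hp1]
        exact eq_neg_of_add_eq_zero_right h0
      have hb' : ((u₁, -p.2.2) : W₁ × W₂) ∈ L12 := by
        have hneg := L12.neg_mem hb
        rw [hu] at hneg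
        simpa using hneg
      have hcomp : ((p.2.1, -p.2.2) : W₀ × W₂) ∈ composeRel L01 L12 := ⟨u₁, ha, hb'⟩
      have h0 := hy _ hcomp
      simp only [pairInner, inner_neg_left] at h0
      rw [hfapp]
      have hstar := congrArg (starRingEnd ℂ) h0
      simp only [map_add, map_neg, inner_conj_symm, map_zero] at hstar
      linear_combination hstar
    obtain ⟨s, hs⟩ := exists_riesz M f hker
    -- the middle witness
    set w : W₁ := r₁.conj s with hw
    have hws : r₁.conj w = s := r₁.invol s
    -- condition (1)
    have c1 : ∀ x ∈ L01, (inner ℂ x.2 s : ℂ) = (inner ℂ x.1 y₁ : ℂ) := by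
      rintro ⟨a, u⟩ hx
      have hmem : ((u, (a, 0)) : W₁ × (W₀ × W₂)) ∈ M :=
        ⟨u, 0, by simp, hx, L12.zero_mem⟩
      have := hs _ hmem
      rw [hfapp] at this
      simpa [inner_conj_symm] using this
    -- condition (2)
    have c2 : ∀ x ∈ L12, (inner ℂ x.1 s : ℂ) = -(inner ℂ x.2 y₂ : ℂ) := by
      rintro ⟨u, b⟩ hx
      have hmem : ((u, (0, b)) : W₁ × (W₀ × W₂)) ∈ M :=
        ⟨0, u, by simp, L01.zero_mem, hx⟩
      have := hs _ hmem
      rw [hfapp] at this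
      simpa [inner_conj_symm] using this
    -- memberships
    have m1 : (r₀.conj y₁, w) ∈ L01 := by
      apply mem_of_lagrangian h01
      rintro ⟨a, u⟩ hx
      have : pairConj r₀ r₁ (r₀.conj y₁, w) = (y₁, -s) := by
        simp [pairConj, r₀.invol, hws]
      rw [this]
      simp only [pairInner, inner_neg_right]
      rw [c1 (a, u) hx]
      ring
    have m2 : (w, -r₂.conj y₂) ∈ L12 := by
      apply mem_of_lagrangian h12
      rintro ⟨u, b⟩ hx
      have : pairConj r₁ r₂ (w, -r₂.conj y₂) = (s, y₂) := by
        simp [pairConj, hws, r₂.conj_neg, r₂.invol]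
      rw [this]
      simp only [pairInner]
      rw [c2 (u, b) hx]
      ring
    refine ⟨(r₀.conj y₁, -r₂.conj y₂), ⟨w, m1, m2⟩, ?_⟩
    simp [pairConj, r₀.invol, r₂.conj_neg, r₂.invol]
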